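/- For every positive integer n there is an automatic left-order on ℤⁿ. Precisely: there exists a linear order ≤ on ℤⁿ that is translation-invariant (b ≤ c implies a + b ≤ a + c for all a, b, c ∈ ℤⁿ) — for example the lexicographic order — such that the language of geodesic words representing positive elements is regular, where: words are over the alphabet of 2n letters consisting of the standard basis vectors e₁, …, eₙ and their negatives; a word is geodesic if for no index i it contains both the letter eᵢ and the letter −eᵢ; a word represents the element of ℤⁿ obtained by summing its letters; and the language {geodesic words w : the element represented by w is > 0 in the order ≤} is accepted by a deterministic finite automaton with finitely many states. -/

import Mathlib

/-- The value in `ℤⁿ` of a letter of the alphabet `Fin n × Bool`: the letter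
`(i, true)` is the standard basis vector `eᵢ` and `(i, false)` is `-eᵢ`. -/
def letterValue {n : ℕ} (l : Fin n × Bool) : Fin n → ℤ :=
  if l.2 then Pi.single l.1 1 else Pi.single l.1 (-1)

/-- The element of `ℤⁿ` represented by a word: the sum of the values of its
letters. -/
def wordValue {n : ℕ} (w : List (Fin n × Bool)) : Fin n → ℤ :=
  (w.map letterValue).sum

/-- A word over the alphabet `{e₁, …, eₙ, -e₁, …, -eₙ}` is geodesic iff for no
index `i` it contains both the letter `eᵢ` and the letter `-eᵢ`. -/
def IsGeodesicWord {n : ℕ} (w : List (Fin n × Bool)) : Prop :=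
  ∀ i : Fin n, ¬ ((i, true) ∈ w ∧ (i, false) ∈ w)

lemma wordValue_apply {n : ℕ} (w : List (Fin n × Bool)) (i : Fin n) :
    wordValue w i = (w.count (i, true) : ℤ) - (w.count (i, false) : ℤ) := by
  induction w with
  | nil => simp [wordValue]
  | cons l w ih =>
    have : wordValue (l :: w) i = letterValue l i + wordValue w i := by
      simp [wordValue, List.sum_cons]
    rw [this, ih]
    obtain ⟨j, b⟩ := l
    by_cases h : i = j
    · subst h
      cases b <;> simp [letterValue, Pi.single_apply, List.count_cons] <;> ring
    · have h' : j ≠ i := Ne.symm h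
      cases b <;>
        simp [letterValue, Pi.single_apply, List.count_cons, Prod.ext_iff, h, h'] <;> ring

/-- The acceptance condition. -/
def acceptCond {n : ℕ} (s : Finset (Fin n × Bool)) : Prop :=
  (∀ i : Fin n, ¬ ((i, true) ∈ s ∧ (i, false) ∈ s)) ∧
    ∃ i : Fin n, (i, true) ∈ s ∧ ∀ j : Fin n, j < i → (j, true) ∉ s ∧ (j, false) ∉ s

/-- For every positive integer `n` there is an automatic left-order on `ℤⁿ`:
a translation-invariant linear order such that the language of geodesic words
representing positive elements is regular. -/
theorem exists_automatic_left_order_on_Zn (n : ℕ) (hn : 0 < n) :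
    ∃ lo : LinearOrder (Fin n → ℤ),
      (∀ a b c : Fin n → ℤ, lo.le b c → lo.le (a + b) (a + c)) ∧
      Language.IsRegular
        {w : List (Fin n × Bool) | IsGeodesicWord w ∧ lo.lt 0 (wordValue w)} := by
  classical
  haveI : WellFoundedLT (Fin n) := Finite.to_wellFoundedLT
  refine ⟨(inferInstance : LinearOrder (Lex (Fin n → ℤ))), ?_, ?_⟩
  · -- translation invariance
    intro a b c hbc
    rcases hbc with h | h
    · exact Or.inl (by rw [h])
    · refine Or.inr ?_
      obtain ⟨i, hlt, hi⟩ := h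
      exact ⟨i, fun j hj => by simp [hlt j hj], by exact (add_lt_add_iff_left (a i)).mpr hi⟩
  · -- regularity
    refine ⟨Finset (Fin n × Bool), inferInstance,
      ⟨fun s l => insert l s, ∅, {s | acceptCond s}⟩, ?_⟩
    ext w
    -- the state reached after reading w
    have hstate : ∀ (w : List (Fin n × Bool)) (s : Finset (Fin n × Bool))
        (a : Fin n × Bool),
        a ∈ DFA.evalFrom ⟨fun s l => insert l s, ∅, {s | acceptCond s}⟩ s w ↔
          a ∈ s ∨ a ∈ w := by
      intro w
      induction w with
      | nil => intro s a; simp [DFA.evalFrom]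
      | cons l w ih =>
        intro s a
        rw [show DFA.evalFrom (⟨fun s l => insert l s, ∅, {s | acceptCond s}⟩ :
              DFA (Fin n × Bool) (Finset (Fin n × Bool))) s (l :: w) =
            DFA.evalFrom _ (insert l s) w from rfl, ih]
        simp [Finset.mem_insert]
        tauto
    have hmem : ∀ a : Fin n × Bool,
        a ∈ DFA.eval ⟨fun s l => insert l s, ∅, {s | acceptCond s}⟩ w ↔ a ∈ w := by
      intro a; rw [DFA.eval, hstate]; simp
    rw [DFA.mem_accepts]
    simp only [Set.mem_setOf_eq]
    constructor
    · rintro ⟨hgeo, i, hi, hmin⟩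
      have hgeo' : IsGeodesicWord w := by
        intro j hj
        exact hgeo j ⟨(hmem _).mpr hj.1, (hmem _).mpr hj.2⟩
      refine ⟨hgeo', ?_⟩
      -- show 0 < wordValue w in Lex order
      refine ⟨i, ?_, ?_⟩
      · intro j hj
        have h1 : (j, true) ∉ w := fun h => (hmin j hj).1 ((hmem _).mpr h)
        have h2 : (j, false) ∉ w := fun h => (hmin j hj).2 ((hmem _).mpr h)
        show (0 : ℤ) = wordValue w j
        rw [wordValue_apply, List.count_eq_zero_of_not_mem h1,
          List.count_eq_zero_of_not_mem h2]
        simp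
      · show (0 : ℤ) < wordValue w i
        have hiw : (i, true) ∈ w := (hmem _).mp hi
        have hfz : (i, false) ∉ w := fun h => hgeo' i ⟨hiw, h⟩
        rw [wordValue_apply, List.count_eq_zero_of_not_mem hfz]
        have : 0 < w.count (i, true) := List.count_pos_iff.2 hiw
        omega
    · rintro ⟨hgeo, i, hmin, hi⟩
      have hg' : ∀ j : Fin n, ¬ ((j, true) ∈ w ∧ (j, false) ∈ w) := hgeo
      refine ⟨fun j hj => hg' j ⟨(hmem _).mp hj.1, (hmem _).mp hj.2⟩, ?_⟩
      have hi' : (0 : ℤ) < wordValue w i := hi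
      have hiw : (i, true) ∈ w := by
        rw [wordValue_apply] at hi'
        by_contra h
        rw [List.count_eq_zero_of_not_mem h] at hi'
        have := List.count_pos_iff.2 (show (i, false) ∈ w by
          by_contra h2
          rw [List.count_eq_zero_of_not_mem h2] at hi'
          omega)
        omega
      refine ⟨i, (hmem _).mpr hiw, fun j hj => ?_⟩
      have hz : (0 : ℤ) = wordValue w j := hmin j hj
      rw [wordValue_apply] at hz
      constructor
      · intro h
        have h' : (j, true) ∈ w := (hmem _).mp h
        have h2 : (j, false) ∉ w := fun hf => hg' j ⟨h', hf⟩
        have := List.count_pos_iff.2 h'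
        rw [List.count_eq_zero_of_not_mem h2] at hz
        omega
      · intro h
        have h' : (j, false) ∈ w := (hmem _).mp h
        have h2 : (j, true) ∉ w := fun hf => hg' j ⟨hf, h'⟩
        have := List.count_pos_iff.2 h'
        rw [List.count_eq_zero_of_not_mem h2] at hz
        omega
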